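/- Under unconfoundedness alone (Y_i(·) ⊥ D | 𝒞_i), the estimand admits the representation τ(t,t') = (1/m_n) Σ_{i∈ℳ_n} [Σ_d E[Y_i(d) | 𝒞_i] P(D=d | T_i=t, 𝒞_i) − Σ_{d'} E[Y_i(d') | 𝒞_i] P(D=d' | T_i=t', 𝒞_i)], and if min_i min 𝒯_i(t,t') ≥ 0, where 𝒯_i(t,t') = {Y_i(d) − Y_i(d') : f(d_{N(i,K)})=t, f(d'_{N(i,K)})=t'}, then τ(t,t') ≥ 0 (general sign preservation). -/
import Mathlib


open Finset
open scoped Classical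

noncomputable section

/-- Probability of event `A` under mass function `p` on a finite space. -/
def prb {Ω : Type*} [Fintype Ω] (p : Ω → ℝ) (A : Ω → Prop) : ℝ :=
  ∑ ω, if A ω then p ω else 0

/-- Unnormalized expectation of `f` on the event `A`. -/
def eiv {Ω : Type*} [Fintype Ω] (p : Ω → ℝ) (f : Ω → ℝ) (A : Ω → Prop) : ℝ :=
  ∑ ω, if A ω then p ω * f ω else 0

/-- Expectation of `f`. -/
def expv {Ω : Type*} [Fintype Ω] (p : Ω → ℝ) (f : Ω → ℝ) : ℝ := ∑ ω, p ω * f ω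

/-- Conditional expectation of `f` given the event `A`. -/
def cexp {Ω : Type*} [Fintype Ω] (p : Ω → ℝ) (f : Ω → ℝ) (A : Ω → Prop) : ℝ :=
  eiv p f A / prb p A

/-- Conditional probability of `A` given `B`. -/
def cpr {Ω : Type*} [Fintype Ω] (p : Ω → ℝ) (A B : Ω → Prop) : ℝ :=
  prb p (fun ω => A ω ∧ B ω) / prb p B

/-- Real value of a boolean treatment. -/
def bR : Bool → ℝ := fun x => if x then 1 else 0

section Framework

variable {Ω : Type*} [Fintype Ω] {n : ℕ} {E : Type*}

/-- The assignment vector equal to `δ i` on the `K`-neighborhood `N i` and to `d` outside it: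
`(δᵢ, d₋N(i,K))`. -/
def pin (N : Fin n → Finset (Fin n)) (δ : Fin n → Fin n → Bool) (i : Fin n)
    (d : Fin n → Bool) : Fin n → Bool :=
  fun j => if j ∈ N i then δ i j else d j

/-- The exposure-mapping estimand
`τ(t,t') = (1/mₙ) Σ_{i∈ℳₙ} (E[Yᵢ | Tᵢ = t, 𝒞ᵢ] − E[Yᵢ | Tᵢ = t', 𝒞ᵢ])`,
where `Tᵢ = f(i, D)` and the event `C i` is the conditioning value of the controls `𝒞ᵢ`. -/
def tauE (p : Ω → ℝ) (Y : Fin n → (Fin n → Bool) → Ω → ℝ) (D : Ω → Fin n → Bool)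
    (C : Fin n → Ω → Prop) (f : Fin n → (Fin n → Bool) → E) (M : Finset (Fin n))
    (t t' : E) : ℝ :=
  (M.card : ℝ)⁻¹ * ∑ i ∈ M,
    (cexp p (fun ω => Y i (D ω) ω) (fun ω => f i (D ω) = t ∧ C i ω) -
     cexp p (fun ω => Y i (D ω) ω) (fun ω => f i (D ω) = t' ∧ C i ω))

/-- `τ*(t,t') = (1/mₙ) Σ_{i∈ℳₙ} Σ_d E[Yᵢ(d) − Yᵢ(δᵢ, d₋N(i,K)) | 𝒞ᵢ] · P(D = d | Tᵢ = t, 𝒞ᵢ)`. -/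
def tauStarE (p : Ω → ℝ) (Y : Fin n → (Fin n → Bool) → Ω → ℝ) (D : Ω → Fin n → Bool)
    (C : Fin n → Ω → Prop) (f : Fin n → (Fin n → Bool) → E) (M : Finset (Fin n))
    (N : Fin n → Finset (Fin n)) (δ : Fin n → Fin n → Bool) (t : E) : ℝ :=
  (M.card : ℝ)⁻¹ * ∑ i ∈ M, ∑ d : Fin n → Bool,
    cexp p (fun ω => Y i d ω - Y i (pin N δ i d) ω) (C i) *
      cpr p (fun ω => D ω = d) (fun ω => f i (D ω) = t ∧ C i ω)

/-- The bias term
`ℛₙ = (1/mₙ) Σ_{i∈ℳₙ} Σ_d E[Yᵢ(δᵢ, d₋N(i,K)) | 𝒞ᵢ] (P(D=d | Tᵢ=t, 𝒞ᵢ) − P(D=d | Tᵢ=t', 𝒞ᵢ))`. -/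
def RnE (p : Ω → ℝ) (Y : Fin n → (Fin n → Bool) → Ω → ℝ) (D : Ω → Fin n → Bool)
    (C : Fin n → Ω → Prop) (f : Fin n → (Fin n → Bool) → E) (M : Finset (Fin n))
    (N : Fin n → Finset (Fin n)) (δ : Fin n → Fin n → Bool) (t t' : E) : ℝ :=
  (M.card : ℝ)⁻¹ * ∑ i ∈ M, ∑ d : Fin n → Bool,
    cexp p (fun ω => Y i (pin N δ i d) ω) (C i) *
      (cpr p (fun ω => D ω = d) (fun ω => f i (D ω) = t ∧ C i ω) -
       cpr p (fun ω => D ω = d) (fun ω => f i (D ω) = t' ∧ C i ω))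

end Framework

section Aux

variable {Ω : Type*} [Fintype Ω] {n : ℕ} {E : Type*}

lemma prb_nonneg (p : Ω → ℝ) (hp : ∀ ω, 0 ≤ p ω) (A : Ω → Prop) : 0 ≤ prb p A :=
  Finset.sum_nonneg fun ω _ => by by_cases h : A ω <;> simp [h, hp ω]

lemma prb_congr (p : Ω → ℝ) {A B : Ω → Prop} (h : ∀ ω, A ω ↔ B ω) :
    prb p A = prb p B :=
  Finset.sum_congr rfl fun ω _ => by rw [if_congr (h ω) rfl rfl]

lemma eiv_congr (p : Ω → ℝ) (g : Ω → ℝ) {A B : Ω → Prop} (h : ∀ ω, A ω ↔ B ω) :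
    eiv p g A = eiv p g B :=
  Finset.sum_congr rfl fun ω _ => by rw [if_congr (h ω) rfl rfl]

lemma prb_of_false (p : Ω → ℝ) {A : Ω → Prop} (h : ∀ ω, ¬ A ω) : prb p A = 0 := by
  unfold prb; simp only [h, if_false]; simp

lemma eiv_of_false (p : Ω → ℝ) (g : Ω → ℝ) {A : Ω → Prop} (h : ∀ ω, ¬ A ω) :
    eiv p g A = 0 := by
  unfold eiv; simp only [h, if_false]; simp

lemma eiv_mono (p : Ω → ℝ) (hp : ∀ ω, 0 ≤ p ω) {g g' : Ω → ℝ} (A : Ω → Prop)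
    (h : ∀ ω, g ω ≤ g' ω) : eiv p g A ≤ eiv p g' A :=
  Finset.sum_le_sum fun ω _ => by
    by_cases hA : A ω
    · simp only [hA, if_true]; exact mul_le_mul_of_nonneg_left (h ω) (hp ω)
    · simp [hA]

lemma cexp_mono (p : Ω → ℝ) (hp : ∀ ω, 0 ≤ p ω) {g g' : Ω → ℝ} {A : Ω → Prop}
    (hA : 0 < prb p A) (h : ∀ ω, g ω ≤ g' ω) : cexp p g A ≤ cexp p g' A :=
  div_le_div_of_nonneg_right (eiv_mono p hp A h) hA.le |>.trans_eq rfl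

lemma sum_prb_fiber (p : Ω → ℝ) (D : Ω → Fin n → Bool) (A : Ω → Prop) :
    ∑ d : Fin n → Bool, prb p (fun ω => D ω = d ∧ A ω) = prb p A := by
  unfold prb
  rw [Finset.sum_comm]
  refine Finset.sum_congr rfl fun ω _ => ?_
  by_cases hA : A ω
  · simp only [hA, and_true]
    rw [Finset.sum_ite_eq Finset.univ (D ω) (fun _ => p ω)]
    simp [hA]
  · simp [hA]

lemma sum_eiv_fiber (p : Ω → ℝ) (D : Ω → Fin n → Bool)
    (Y : (Fin n → Bool) → Ω → ℝ) (A : Ω → Prop) :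
    ∑ d : Fin n → Bool, eiv p (fun ω => Y d ω) (fun ω => D ω = d ∧ A ω) =
      eiv p (fun ω => Y (D ω) ω) A := by
  unfold eiv
  rw [Finset.sum_comm]
  refine Finset.sum_congr rfl fun ω _ => ?_
  by_cases hA : A ω
  · simp only [hA, and_true]
    rw [Finset.sum_ite_eq Finset.univ (D ω) (fun d => p ω * Y d ω)]
    simp [hA]
  · simp [hA]

/-- Mixture representation of the conditional expectation over exposure events. -/
lemma mixture (p : Ω → ℝ) (Y : (Fin n → Bool) → Ω → ℝ) (D : Ω → Fin n → Bool)
    (C : Ω → Prop) (g : (Fin n → Bool) → E) (t : E)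
    (hunc : ∀ d dvec : Fin n → Bool,
      eiv p (fun ω => Y d ω) (fun ω => D ω = dvec ∧ C ω) * prb p C =
        eiv p (fun ω => Y d ω) C * prb p (fun ω => D ω = dvec ∧ C ω))
    (hC : 0 < prb p C) :
    cexp p (fun ω => Y (D ω) ω) (fun ω => g (D ω) = t ∧ C ω) =
      ∑ d : Fin n → Bool, cexp p (fun ω => Y d ω) C *
        cpr p (fun ω => D ω = d) (fun ω => g (D ω) = t ∧ C ω) := by
  set A : Ω → Prop := fun ω => g (D ω) = t ∧ C ω with hAdef
  have key : eiv p (fun ω => Y (D ω) ω) A =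
      ∑ d : Fin n → Bool, cexp p (fun ω => Y d ω) C *
        prb p (fun ω => D ω = d ∧ A ω) := by
    rw [← sum_eiv_fiber p D Y A]
    refine Finset.sum_congr rfl fun d _ => ?_
    by_cases hd : g d = t
    · have hiff : ∀ ω, (D ω = d ∧ A ω) ↔ (D ω = d ∧ C ω) := by
        intro ω
        constructor
        · rintro ⟨h1, _, h3⟩; exact ⟨h1, h3⟩
        · rintro ⟨h1, h2⟩; exact ⟨h1, h1 ▸ hd, h2⟩
      rw [eiv_congr p _ hiff, prb_congr p hiff]
      have h1 := hunc d d
      rw [cexp]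
      field_simp
      linarith
    · have hfalse : ∀ ω, ¬ (D ω = d ∧ A ω) := by
        rintro ω ⟨h1, h2, h3⟩
        exact hd (h1 ▸ h2)
      rw [eiv_of_false p _ hfalse, prb_of_false p hfalse, mul_zero]
  unfold cexp cpr
  rw [key, Finset.sum_div]
  refine Finset.sum_congr rfl fun d _ => ?_
  rw [mul_div_assoc, cexp]

/-- Comparison of two mixtures of the same values. -/
lemma mix_le_mix {α : Type*} [Fintype α] (a q r : α → ℝ)
    (hq0 : ∀ d, 0 ≤ q d) (hr0 : ∀ d, 0 ≤ r d)
    (hq1 : ∑ d, q d = 1) (hr1 : ∑ d, r d = 1)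
    (h : ∀ d d', 0 < q d → 0 < r d' → a d' ≤ a d) :
    ∑ d, a d * r d ≤ ∑ d, a d * q d := by
  have lhs : ∑ d, a d * r d = ∑ d : α, ∑ d' : α, a d' * r d' * q d := by
    rw [Finset.sum_comm]
    refine Finset.sum_congr rfl fun d' _ => ?_
    rw [← Finset.mul_sum, hq1, mul_one]
  have rhs : ∑ d, a d * q d = ∑ d : α, ∑ d' : α, a d * q d * r d' := by
    refine Finset.sum_congr rfl fun d _ => ?_
    rw [← Finset.mul_sum, hr1, mul_one]
  rw [lhs, rhs]
  refine Finset.sum_le_sum fun d _ => Finset.sum_le_sum fun d' _ => ?_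
  rcases (hq0 d).eq_or_lt with hq | hq
  · rw [← hq]; ring_nf; simp
  rcases (hr0 d').eq_or_lt with hr | hr
  · rw [← hr]; ring_nf; simp
  have hab := h d d' hq hr
  nlinarith [mul_le_mul_of_nonneg_right hab (mul_pos hq hr).le]

end Aux

/-- under unconfoundedness alone, the estimand admits the mixture representation
`τ(t,t') = (1/mₙ) Σ_{i∈ℳₙ} [Σ_d E[Yᵢ(d)|𝒞ᵢ] P(D=d|Tᵢ=t,𝒞ᵢ) − Σ_{d'} E[Yᵢ(d')|𝒞ᵢ]
P(D=d'|Tᵢ=t',𝒞ᵢ)]`, and general sign preservation holds: if all cross-assignment contrasts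
`Yᵢ(d) − Yᵢ(d')` with `f(d_{N(i,K)}) = t` and `f(d'_{N(i,K)}) = t'` are nonnegative then
`τ(t,t') ≥ 0`, and symmetrically for nonpositive contrasts. -/
theorem stmt18 {Ω : Type*} [Fintype Ω] {n : ℕ} {E : Type*}
    (p : Ω → ℝ) (hp : ∀ ω, 0 ≤ p ω) (hp1 : ∑ ω, p ω = 1)
    (Y : Fin n → (Fin n → Bool) → Ω → ℝ) (D : Ω → Fin n → Bool)
    (C : Fin n → Ω → Prop) (N : Fin n → Finset (Fin n))
    (f : Fin n → (Fin n → Bool) → E) (M : Finset (Fin n)) (t t' : E)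
    (hf : ∀ (i : Fin n) (d d' : Fin n → Bool), (∀ j ∈ N i, d j = d' j) → f i d = f i d')
    (hunc : ∀ (i : Fin n) (d dvec : Fin n → Bool),
      eiv p (fun ω => Y i d ω) (fun ω => D ω = dvec ∧ C i ω) * prb p (C i) =
        eiv p (fun ω => Y i d ω) (C i) * prb p (fun ω => D ω = dvec ∧ C i ω))
    (hC : ∀ i ∈ M, 0 < prb p (C i))
    (hposT : ∀ i ∈ M, 0 < prb p (fun ω => f i (D ω) = t ∧ C i ω))
    (hposT' : ∀ i ∈ M, 0 < prb p (fun ω => f i (D ω) = t' ∧ C i ω)) :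
    tauE p Y D C f M t t' =
      (M.card : ℝ)⁻¹ * ∑ i ∈ M,
        (∑ d : Fin n → Bool, cexp p (fun ω => Y i d ω) (C i) *
            cpr p (fun ω => D ω = d) (fun ω => f i (D ω) = t ∧ C i ω) -
         ∑ d' : Fin n → Bool, cexp p (fun ω => Y i d' ω) (C i) *
            cpr p (fun ω => D ω = d') (fun ω => f i (D ω) = t' ∧ C i ω)) ∧
    ((∀ i ∈ M, ∀ (d d' : Fin n → Bool), f i d = t → f i d' = t' →
        ∀ ω, Y i d' ω ≤ Y i d ω) →
      0 ≤ tauE p Y D C f M t t') ∧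
    ((∀ i ∈ M, ∀ (d d' : Fin n → Bool), f i d = t → f i d' = t' →
        ∀ ω, Y i d ω ≤ Y i d' ω) →
      tauE p Y D C f M t t' ≤ 0) := by
  -- per-unit mixture identities
  have hmixt : ∀ i ∈ M,
      cexp p (fun ω => Y i (D ω) ω) (fun ω => f i (D ω) = t ∧ C i ω) =
        ∑ d : Fin n → Bool, cexp p (fun ω => Y i d ω) (C i) *
          cpr p (fun ω => D ω = d) (fun ω => f i (D ω) = t ∧ C i ω) :=
    fun i hi => mixture p (Y i) D (C i) (f i) t (hunc i) (hC i hi)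
  have hmixt' : ∀ i ∈ M,
      cexp p (fun ω => Y i (D ω) ω) (fun ω => f i (D ω) = t' ∧ C i ω) =
        ∑ d : Fin n → Bool, cexp p (fun ω => Y i d ω) (C i) *
          cpr p (fun ω => D ω = d) (fun ω => f i (D ω) = t' ∧ C i ω) :=
    fun i hi => mixture p (Y i) D (C i) (f i) t' (hunc i) (hC i hi)
  -- conditional-probability weights facts
  have hw : ∀ (s : E), ∀ i ∈ M, 0 < prb p (fun ω => f i (D ω) = s ∧ C i ω) →
      (∀ d, 0 ≤ cpr p (fun ω => D ω = d) (fun ω => f i (D ω) = s ∧ C i ω)) ∧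
      (∑ d : Fin n → Bool,
        cpr p (fun ω => D ω = d) (fun ω => f i (D ω) = s ∧ C i ω)) = 1 ∧
      (∀ d, 0 < cpr p (fun ω => D ω = d) (fun ω => f i (D ω) = s ∧ C i ω) →
        f i d = s) := by
    intro s i _ hpos
    refine ⟨fun d => div_nonneg (prb_nonneg p hp _) hpos.le, ?_, ?_⟩
    · unfold cpr
      rw [← Finset.sum_div, sum_prb_fiber p D, div_self hpos.ne']
    · intro d hd
      by_contra hne
      have hfalse : ∀ ω, ¬ (D ω = d ∧ f i (D ω) = s ∧ C i ω) := by
        rintro ω ⟨h1, h2, _⟩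
        exact hne (h1 ▸ h2)
      rw [cpr, prb_of_false p hfalse, zero_div] at hd
      exact lt_irrefl 0 hd
  -- first conjunct
  have hrep : tauE p Y D C f M t t' =
      (M.card : ℝ)⁻¹ * ∑ i ∈ M,
        (∑ d : Fin n → Bool, cexp p (fun ω => Y i d ω) (C i) *
            cpr p (fun ω => D ω = d) (fun ω => f i (D ω) = t ∧ C i ω) -
         ∑ d' : Fin n → Bool, cexp p (fun ω => Y i d' ω) (C i) *
            cpr p (fun ω => D ω = d') (fun ω => f i (D ω) = t' ∧ C i ω)) := by
    unfold tauE
    congr 1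
    refine Finset.sum_congr rfl fun i hi => ?_
    rw [hmixt i hi, hmixt' i hi]
  refine ⟨hrep, ?_, ?_⟩
  · intro hsign
    rw [hrep]
    refine mul_nonneg (inv_nonneg.mpr (Nat.cast_nonneg _)) (Finset.sum_nonneg fun i hi => ?_)
    obtain ⟨hq0, hq1, hqs⟩ := hw t i hi (hposT i hi)
    obtain ⟨hr0, hr1, hrs⟩ := hw t' i hi (hposT' i hi)
    rw [sub_nonneg]
    refine mix_le_mix (fun d => cexp p (fun ω => Y i d ω) (C i)) _ _ hq0 hr0 hq1 hr1 ?_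
    intro d d' hqd hrd
    exact cexp_mono p hp (hC i hi) (hsign i hi d d' (hqs d hqd) (hrs d' hrd))
  · intro hsign
    rw [hrep]
    have hsum : (∑ i ∈ M,
        (∑ d : Fin n → Bool, cexp p (fun ω => Y i d ω) (C i) *
            cpr p (fun ω => D ω = d) (fun ω => f i (D ω) = t ∧ C i ω) -
         ∑ d' : Fin n → Bool, cexp p (fun ω => Y i d' ω) (C i) *
            cpr p (fun ω => D ω = d') (fun ω => f i (D ω) = t' ∧ C i ω))) ≤ 0 := by
      refine Finset.sum_nonpos fun i hi => ?_
      obtain ⟨hq0, hq1, hqs⟩ := hw t i hi (hposT i hi)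
      obtain ⟨hr0, hr1, hrs⟩ := hw t' i hi (hposT' i hi)
      rw [sub_nonpos]
      refine mix_le_mix (fun d => cexp p (fun ω => Y i d ω) (C i)) _ _ hr0 hq0 hr1 hq1 ?_
      intro d d' hrd hqd
      exact cexp_mono p hp (hC i hi) (hsign i hi d' d (hqs d' hqd) (hrs d hrd))
    have hinv : (0:ℝ) ≤ (M.card : ℝ)⁻¹ := inv_nonneg.mpr (Nat.cast_nonneg _)
    exact mul_nonpos_of_nonneg_of_nonpos hinv hsum
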